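/- For any integer k ≥ 1, if n is a positive integer with σ(n) = k·n and n > 1, then H_{τ(n)} > k strictly (where τ(n) is the number of divisors of n), since the divisor set of n is not an initial segment {1, 2, ..., τ(n)} as n | n and n > τ(n) for n > 2. -/

import Mathlib

lemma aux_harm : ∀ S : Finset ℕ, 0 ∉ S →
    ∑ d ∈ S, (1:ℝ)/d ≤ ∑ i ∈ Finset.Icc 1 S.card, (1:ℝ)/i := by
  intro S
  induction S using Finset.strongInduction with
  | _ S ih =>
    intro h0
    rcases S.eq_empty_or_nonempty with rfl | hne
    · simp
    · set M := S.max' hne with hMdef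
      have hM : M ∈ S := S.max'_mem hne
      have hcpos : 0 < S.card := Finset.card_pos.mpr hne
      have hcard : S.card ≤ M := by
        have hsub : S ⊆ Finset.Icc 1 M := fun x hx => Finset.mem_Icc.mpr
          ⟨Nat.one_le_iff_ne_zero.mpr (fun hx0 => h0 (hx0 ▸ hx)), S.le_max' x hx⟩
        calc S.card ≤ (Finset.Icc 1 M).card := Finset.card_le_card hsub
          _ = M := by simp
      have h0' : (0:ℕ) ∉ S.erase M := fun hx => h0 (Finset.mem_of_mem_erase hx)
      have ih' := ih (S.erase M) (Finset.erase_ssubset hM) h0'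
      have hcard' : (S.erase M).card = S.card - 1 := Finset.card_erase_of_mem hM
      have hsplit : ∑ d ∈ S, (1:ℝ)/d = (∑ d ∈ S.erase M, (1:ℝ)/d) + 1/M :=
        (Finset.sum_erase_add S _ hM).symm
      have hrhs : ∑ i ∈ Finset.Icc 1 S.card, (1:ℝ)/i
          = (∑ i ∈ Finset.Icc 1 (S.card - 1), (1:ℝ)/i) + 1/S.card := by
        have hc : S.card = (S.card - 1) + 1 := (Nat.succ_pred_eq_of_pos hcpos).symm
        rw [hc, Finset.sum_Icc_succ_top (by omega)]
        rw [← hc]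
      have hMle : (1:ℝ)/M ≤ 1/S.card := by
        apply one_div_le_one_div_of_le
        · exact_mod_cast hcpos
        · exact_mod_cast hcard
      rw [hcard'] at ih'
      rw [hsplit, hrhs]
      linarith

theorem stmt_19 (n k : ℕ) (hk : 1 ≤ k) (hn : 1 < n) (h : (n.divisors.sum id) = k * n) :
    (k : ℝ) < ∑ i ∈ Finset.Icc 1 n.divisors.card, (1 : ℝ) / i := by
  have hn0 : n ≠ 0 := by omega
  have hn2 : 2 < n := by
    rcases Nat.lt_or_ge n 3 with h3 | h3
    · interval_cases n
      · have h2 : Nat.divisors 2 = {1, 2} := by decide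
        rw [h2] at h
        simp at h
        omega
    · omega
  -- k as a real sum of reciprocals of divisors
  have hksum : (k:ℝ) = ∑ d ∈ n.divisors, (1:ℝ)/d := by
    have h1 : ∑ d ∈ n.divisors, (1:ℝ)/(↑(n/d)) = ∑ d ∈ n.divisors, (1:ℝ)/d :=
      Nat.sum_div_divisors n (fun d => (1:ℝ)/d)
    have h2 : ∑ d ∈ n.divisors, (1:ℝ)/(↑(n/d)) = ∑ d ∈ n.divisors, (d:ℝ)/n := by
      apply Finset.sum_congr rfl
      intro d hd
      obtain ⟨hdvd, _⟩ := Nat.mem_divisors.mp hd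
      have hd0 : (d:ℝ) ≠ 0 := Nat.cast_ne_zero.mpr (Nat.pos_of_mem_divisors hd).ne'
      rw [Nat.cast_div hdvd hd0, one_div_div]
    have h3 : ∑ d ∈ n.divisors, (d:ℝ)/n = (k:ℝ) := by
      rw [← Finset.sum_div]
      have hc : (∑ d ∈ n.divisors, (d:ℝ)) = (k:ℝ) * n := by
        have h' : (∑ d ∈ n.divisors, d) = k * n := h
        rw [← Nat.cast_sum]; exact_mod_cast congrArg (fun x : ℕ => (x:ℝ)) h'
      rw [hc]
      field_simp
    rw [← h1, h2, h3]
  set m := n.divisors.card with hm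
  have hnmem : n ∈ n.divisors := Nat.mem_divisors_self n hn0
  have hmlt : m < n := by
    have hss : n.divisors ⊂ Finset.Icc 1 n := by
      constructor
      · intro x hx
        exact Finset.mem_Icc.mpr ⟨Nat.pos_of_mem_divisors hx, Nat.divisor_le hx⟩
      · intro hsub
        have hmem : n - 1 ∈ Finset.Icc 1 n := Finset.mem_Icc.mpr ⟨by omega, by omega⟩
        have := Nat.mem_divisors.mp (hsub hmem) |>.1
        have h1 : n - 1 ∣ n - (n-1) := (Nat.dvd_sub this dvd_rfl)
        have : n - (n-1) = 1 := by omega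
        rw [this] at h1
        have := Nat.le_of_dvd one_pos h1
        omega
    calc m < (Finset.Icc 1 n).card := Finset.card_lt_card hss
      _ = n := by simp
  have hmpos : 0 < m := Finset.card_pos.mpr ⟨n, hnmem⟩
  have h0 : (0:ℕ) ∉ n.divisors := by simp
  have h0' : (0:ℕ) ∉ n.divisors.erase n := fun hx => h0 (Finset.mem_of_mem_erase hx)
  have haux := aux_harm (n.divisors.erase n) h0'
  have hcard' : (n.divisors.erase n).card = m - 1 := Finset.card_erase_of_mem hnmem
  have hsplit : ∑ d ∈ n.divisors, (1:ℝ)/d = (∑ d ∈ n.divisors.erase n, (1:ℝ)/d) + 1/n :=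
    (Finset.sum_erase_add _ _ hnmem).symm
  have hrhs : ∑ i ∈ Finset.Icc 1 m, (1:ℝ)/i
      = (∑ i ∈ Finset.Icc 1 (m - 1), (1:ℝ)/i) + 1/m := by
    have hc : m = (m - 1) + 1 := (Nat.succ_pred_eq_of_pos hmpos).symm
    rw [hc, Finset.sum_Icc_succ_top (by omega)]
    rw [← hc]
  have hlt : (1:ℝ)/n < 1/m := by
    apply one_div_lt_one_div_of_lt
    · exact_mod_cast hmpos
    · exact_mod_cast hmlt
  rw [hcard'] at haux
  rw [hksum, hsplit, hrhs]
  linarith
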